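/- Let k be a field of characteristic ≠ 2, let M be a semi-simple module with M⁰ ≠ 0, and let d ∈ k*. Then there exists a quadratic space q over k with det(q) = d in k*/k*² having an isometry with module M. -/

import Mathlib

open Polynomial

noncomputable section

variable {k : Type} [Field k]

/-- `f*(X) = f(0)⁻¹ X^{deg f} f(1/X)`. -/
def starPoly (f : k[X]) : k[X] := Polynomial.C (f.coeff 0)⁻¹ * f.reverse

/-- Type 0 : a product of powers of `X - 1` and `X + 1`. -/
def IsType0Pol (f : k[X]) : Prop := ∃ a b : ℕ, f = (X - 1 : k[X]) ^ a * (X + 1) ^ b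

/-- Type 1 : a product of (powers of) monic symmetric irreducible polynomials of even degree. -/
def IsType1Pol (f : k[X]) : Prop :=
  ∃ s : Multiset k[X],
    (∀ g ∈ s, g.Monic ∧ Irreducible g ∧ g = g.reverse ∧ Even g.natDegree) ∧ f = s.prod

/-- Type 2 : a product of polynomials `g * g*` with `g` monic irreducible, `g ≠ ±g*`. -/
def IsType2Pol (f : k[X]) : Prop :=
  ∃ s : Multiset k[X],
    (∀ g ∈ s, g.Monic ∧ Irreducible g ∧ g ≠ starPoly g ∧ g ≠ -starPoly g) ∧
    f = (s.map fun g => g * starPoly g).prod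

/-- A monic polynomial is hyperbolic if it is of the form `G·G*`; equivalently, all its
components of type 0 and 1 occur with an even exponent. -/
def IsHyperbolicPoly (f : k[X]) : Prop := ∃ g : k[X], g.Monic ∧ f = g * starPoly g

/-- Data describing a self-dual torsion `k[X]`-module which is finite dimensional over `k`:
the direct sum, over `i`, of `[k[X]/(f i ^ e i)]^(n i)`, where each `f i` is monic
irreducible, and where the collection is self-dual (stable under `f ↦ f*`). -/
structure ModuleData (k : Type) [Field k] where
  ι : Type
  [fin : Fintype ι]
  f : ι → k[X]
  e : ι → ℕ
  n : ι → ℕ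
  monic : ∀ i, (f i).Monic
  irr : ∀ i, Irreducible (f i)
  epos : ∀ i, 0 < e i
  npos : ∀ i, 0 < n i
  selfdual : ∃ σ : Equiv.Perm ι,
    ∀ i, f (σ i) = starPoly (f i) ∧ e (σ i) = e i ∧ n (σ i) = n i

attribute [instance] ModuleData.fin

namespace ModuleData

variable (D : ModuleData k)

/-- The underlying `K[X]`-module of `M ⊗_k K`, realised concretely, for an extension
`ι : k →+* K`. -/
abbrev SpaceVia {K : Type} [Field K] (ι : k →+* K) : Type :=
  (i : D.ι) → Fin (D.n i) →
    (Polynomial K ⧸ Ideal.span {((D.f i).map ι) ^ D.e i})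

/-- The dimension of `M` as a `k`-vector space. -/
def dim : ℕ := ∑ i, D.n i * (D.e i * (D.f i).natDegree)

/-- The characteristic polynomial `F_M` of `M`. -/
def charPoly : k[X] := ∏ i, D.f i ^ (D.n i * D.e i)

/-- The summand `i` is of type 0 : `f i` is `X - 1` or `X + 1`. -/
def IsIdx0 (i : D.ι) : Prop := D.f i = X - 1 ∨ D.f i = X + 1

/-- The summand `i` is of type 1 : `f i` is symmetric of even degree. -/
def IsIdx1 (i : D.ι) : Prop := D.f i = (D.f i).reverse ∧ Even (D.f i).natDegree

/-- The summand `i` is of type 2 : `f i` is not self-dual. -/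
def IsIdx2 (i : D.ι) : Prop := D.f i ≠ starPoly (D.f i)

open Classical in
/-- `dim_k M⁰`. -/
def dim0 : ℕ := ∑ i, if D.IsIdx0 i then D.n i * (D.e i * (D.f i).natDegree) else 0

open Classical in
/-- `dim_k M¹`. -/
def dim1 : ℕ := ∑ i, if D.IsIdx1 i then D.n i * (D.e i * (D.f i).natDegree) else 0

open Classical in
/-- `dim_k M²`. -/
def dim2 : ℕ := ∑ i, if D.IsIdx2 i then D.n i * (D.e i * (D.f i).natDegree) else 0

/-- `M` is semi-simple : all exponents are 1. -/
def Semisimple : Prop := ∀ i, D.e i = 1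

/-- `M̄_odd` : the direct sum of the summands `[k[X]/(f)]^n`, over those summands
`[k[X]/(f^e)]^n` of `M` with `e` odd and `f` self-dual (`f = f*`). -/
def oddBar : ModuleData k where
  ι := {i : D.ι // Odd (D.e i) ∧ D.f i = starPoly (D.f i)}
  fin := by classical exact inferInstance
  f i := D.f i.1
  e _ := 1
  n i := D.n i.1
  monic i := D.monic i.1
  irr i := D.irr i.1
  epos _ := one_pos
  npos i := D.npos i.1
  selfdual := ⟨Equiv.refl _, fun i => ⟨i.2.2, rfl, rfl⟩⟩

end ModuleData

theorem starPoly_eq_self_of_symm {f : k[X]} (hm : f.Monic) (hs : f = f.reverse) :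
    starPoly f = f := by
  have h0 : f.coeff 0 = 1 := by
    conv_lhs => rw [hs]
    rw [Polynomial.coeff_zero_reverse]
    exact hm
  rw [starPoly, h0, inv_one, map_one, one_mul, ← hs]

/-- The module `[k[X]/(f)]^m` for a monic symmetric irreducible `f`. -/
def ModuleData.single (f : k[X]) (hmon : f.Monic) (hirr : Irreducible f)
    (hsym : f = f.reverse) (m : ℕ) (hm : 0 < m) : ModuleData k where
  ι := Unit
  fin := inferInstance
  f _ := f
  e _ := 1
  n _ := m
  monic _ := hmon
  irr _ := hirr
  epos _ := one_pos
  npos _ := hm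
  selfdual := ⟨Equiv.refl _, fun _ => ⟨(starPoly_eq_self_of_symm hmon hsym).symm, rfl, rfl⟩⟩

section Bilin

variable {V : Type} [AddCommGroup V] [Module k V]

/-- `t` is an isometry of the bilinear space `(V, B)`. -/
def IsIsometryOf (B : LinearMap.BilinForm k V) (t : V ≃ₗ[k] V) : Prop :=
  ∀ x y, B (t x) (t y) = B x y

/-- `(V, B)` is a quadratic space : `B` is a symmetric bilinear form of non-zero
determinant (equivalently, non-degenerate). -/
def IsQuadraticSpace (B : LinearMap.BilinForm k V) : Prop :=
  (∀ x y, B x y = B y x) ∧ (∀ x, (∀ y, B x y = 0) → x = 0)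

/-- The bilinear space `(W, B)` over an extension `ι : k →+* K` has an isometry whose
associated `K[X]`-module is `M ⊗_k K`. -/
def HasIsometryWithModuleVia {K : Type} [Field K] (ι : k →+* K)
    {W : Type} [AddCommGroup W] [Module K W]
    (B : LinearMap.BilinForm K W) (D : ModuleData k) : Prop :=
  ∃ t : W ≃ₗ[K] W, IsIsometryOf B t ∧
    ∃ φ : W ≃ₗ[K] D.SpaceVia ι, ∀ w, φ (t w) = (X : Polynomial K) • φ w

/-- `(V, B)` has an isometry with module `M`. -/
def HasIsometryWithModule (B : LinearMap.BilinForm k V) (D : ModuleData k) : Prop :=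
  HasIsometryWithModuleVia (RingHom.id k) B D

/-- The bilinear space `(W, B)` over an extension `ι : k →+* K` has an isometry with
minimal polynomial (the image of) `f`. -/
def HasIsometryWithMinpolyVia {K : Type} [Field K] (ι : k →+* K)
    {W : Type} [AddCommGroup W] [Module K W]
    (B : LinearMap.BilinForm K W) (f : k[X]) : Prop :=
  ∃ t : W ≃ₗ[K] W, IsIsometryOf B t ∧ minpoly K t.toLinearMap = f.map ι

/-- `(V, B)` has an isometry with minimal polynomial `f`. -/
def HasIsometryWithMinpoly (B : LinearMap.BilinForm k V) (f : k[X]) : Prop :=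
  ∃ t : V ≃ₗ[k] V, IsIsometryOf B t ∧ minpoly k t.toLinearMap = f

/-- A (2n)-dimensional quadratic space is hyperbolic if it has a self-orthogonal subspace
of dimension n. -/
def IsHyperbolicSpace (B : LinearMap.BilinForm k V) : Prop :=
  ∃ W : Submodule k V, (∀ x ∈ W, ∀ y ∈ W, B x y = 0) ∧
    2 * Module.finrank k W = Module.finrank k V

/-- The Witt index : the largest dimension of a totally isotropic subspace. -/
def wittIndex (B : LinearMap.BilinForm k V) : ℕ :=
  sSup {m | ∃ W : Submodule k V, (∀ x ∈ W, ∀ y ∈ W, B x y = 0) ∧ Module.finrank k W = m}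

variable [FiniteDimensional k V]

/-- The Gram matrix of `B` with respect to a fixed basis. -/
def gramOf (B : LinearMap.BilinForm k V) :
    Matrix (Fin (Module.finrank k V)) (Fin (Module.finrank k V)) k :=
  LinearMap.toMatrix₂ (Module.finBasis k V) (Module.finBasis k V) B

/-- The determinant of `B` (well defined modulo nonzero squares). -/
def detOf (B : LinearMap.BilinForm k V) : k := (gramOf B).det

end Bilin

section AuxLemmas
set_option linter.unusedSectionVars false

theorem my_reverse_reverse {p : k[X]} (h0 : p.coeff 0 ≠ 0) : p.reverse.reverse = p := by
  have ht : p.natTrailingDegree = 0 := natTrailingDegree_eq_zero.mpr (Or.inr h0)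
  have hd : p.reverse.natDegree = p.natDegree := by
    rw [Polynomial.reverse_natDegree, ht, Nat.sub_zero]
  conv_lhs => rw [Polynomial.reverse, hd]
  rw [Polynomial.reverse]
  ext n
  rw [Polynomial.coeff_reflect, Polynomial.coeff_reflect, Polynomial.revAt_invol]

theorem my_reverse_C_mul {a : k} (ha : a ≠ 0) (p : k[X]) :
    (C a * p).reverse = C a * p.reverse := by
  rcases eq_or_ne p 0 with rfl | hp
  · simp
  · unfold Polynomial.reverse
    rw [natDegree_C_mul ha, reflect_C_mul]

theorem starPoly_coeff_zero {p : k[X]} (hm : p.Monic) :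
    (starPoly p).coeff 0 = (p.coeff 0)⁻¹ := by
  simp [starPoly, coeff_C_mul, Polynomial.coeff_zero_reverse, hm.leadingCoeff]

theorem starPoly_starPoly {p : k[X]} (hm : p.Monic) (h0 : p.coeff 0 ≠ 0) :
    starPoly (starPoly p) = p := by
  rw [starPoly, starPoly_coeff_zero hm, inv_inv, starPoly,
    my_reverse_C_mul (inv_ne_zero h0), ← mul_assoc, ← C_mul, mul_inv_cancel₀ h0, C_1, one_mul,
    my_reverse_reverse h0]

theorem starPoly_X_sub_one : starPoly ((X : k[X]) - 1) = X - 1 := by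
  have h1 : ((X : k[X]) - 1) = X + C (-1) := by simp [sub_eq_add_neg]
  have hrev : ((X : k[X]) - 1).reverse = 1 - X := by
    rw [h1, reverse_add_C]
    have : (X : k[X]).reverse = 1 := by
      have h := reverse_X_mul (1 : k[X])
      rwa [mul_one, show (1:k[X]) = C 1 from (C_1).symm, reverse_C] at h
    rw [this, natDegree_X]
    ring_nf
    simp [C_neg]
    ring
  have hc : ((X : k[X]) - 1).coeff 0 = -1 := by simp
  rw [starPoly, hc, hrev]
  have : ((-1 : k))⁻¹ = -1 := by norm_num
  rw [this]
  ring_nf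
  simp [C_neg]

theorem starPoly_X_add_one : starPoly ((X : k[X]) + 1) = X + 1 := by
  have hrev : ((X : k[X]) + 1).reverse = 1 + X := by
    have h1 : ((X : k[X]) + 1) = X + C 1 := by simp
    rw [h1, reverse_add_C]
    have : (X : k[X]).reverse = 1 := by
      have h := reverse_X_mul (1 : k[X])
      rwa [mul_one, show (1:k[X]) = C 1 from (C_1).symm, reverse_C] at h
    rw [this, natDegree_X]
    simp [add_comm]
  have hc : ((X : k[X]) + 1).coeff 0 = 1 := by simp
  rw [starPoly, hc, hrev]
  simp [add_comm]

theorem aeval_inv_of_star_root {A : Type} [Field A] [Algebra k A]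
    {g : k[X]} (h0 : g.coeff 0 ≠ 0) {x : A} (hx : x ≠ 0)
    (hgx : aeval x (starPoly g) = 0) : aeval x⁻¹ g = 0 := by
  have hrev : aeval x g.reverse = 0 := by
    rw [starPoly, map_mul, aeval_C] at hgx
    have hC : algebraMap k A (g.coeff 0)⁻¹ ≠ 0 := by
      simpa using inv_ne_zero h0
    exact (mul_eq_zero.mp hgx).resolve_left hC
  haveI := invertibleOfNonzero (inv_ne_zero hx)
  have := (Polynomial.eval₂_reverse_eq_zero_iff (algebraMap k A) x⁻¹ g).mp ?_
  · exact this
  · rw [invOf_eq_inv, inv_inv]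
    exact hrev

theorem aeval_inv_root_of_star {A : Type} [Field A] [Algebra k A]
    {g : k[X]} (h0 : g.coeff 0 ≠ 0) {x : A} (hx : x ≠ 0)
    (hgx : aeval x g = 0) : aeval x⁻¹ (starPoly g) = 0 := by
  rw [starPoly, map_mul]
  suffices h : aeval x⁻¹ g.reverse = 0 by rw [h, mul_zero]
  haveI := invertibleOfNonzero hx
  have := (Polynomial.eval₂_reverse_eq_zero_iff (algebraMap k A) x g).mpr hgx
  rwa [invOf_eq_inv] at this

open Finset in
theorem orderIso_congr_aux {ι : Type} [LinearOrder ι] {S T : Finset ι} (hST : S = T)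
    {m m' : ℕ} (hS : S.card = m) (hT : T.card = m') (x : Fin m) (x' : Fin m')
    (hx : (x : ℕ) = (x' : ℕ)) :
    (S.orderIsoOfFin hS x : ι) = (T.orderIsoOfFin hT x' : ι) := by
  subst hST; subst hS; subst hT
  have : x = x' := Fin.ext hx
  rw [this]

open Finset in
theorem orderIso_symm_congr_aux {ι : Type} [LinearOrder ι] {S T : Finset ι} (hST : S = T)
    {m m' : ℕ} (hS : S.card = m) (hT : T.card = m') (y : {a // a ∈ S}) (y' : {a // a ∈ T})
    (hy : (y : ι) = (y' : ι)) :
    (((S.orderIsoOfFin hS).symm y : Fin m) : ℕ) = (((T.orderIsoOfFin hT).symm y' : Fin m') : ℕ) := by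
  subst hST; subst hS; subst hT
  have : y = y' := Subtype.ext hy
  rw [this]

theorem exists_involution_matching {ι β : Type} [Fintype ι]
    (c : ι → β) (s : β → β) (hs : ∀ i, s (s (c i)) = c i)
    (σ : Equiv.Perm ι) (hσ : ∀ i, c (σ i) = s (c i)) :
    ∃ π : ι → ι, (∀ i, π (π i) = i) ∧ (∀ i, c (π i) = s (c i)) ∧
      (∀ i, s (c i) = c i → π i = i) := by
  classical
  letI : LinearOrder ι := LinearOrder.lift' (Fintype.equivFin ι) (Equiv.injective _)
  set Fib : β → Finset ι := fun b => Finset.univ.filter (fun i => c i = b) with hFib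
  have hmem' : ∀ (i : ι) (b : β), i ∈ Fib b ↔ c i = b := fun i b => by simp [hFib]
  have hmem : ∀ i, i ∈ Fib (c i) := fun i => (hmem' i _).mpr rfl
  have hcard : ∀ i, (Fib (s (c i))).card = (Fib (c i)).card := by
    intro i
    have key : ∀ j : ι, (Fib (c j)).card ≤ (Fib (s (c j))).card := by
      intro j
      apply Finset.card_le_card_of_injOn σ
      · intro x hx
        rw [Finset.mem_coe, hmem'] at hx ⊢
        rw [hσ, hx]
      · exact fun a _ b _ h => σ.injective h
    refine le_antisymm ?_ (key i)
    have h2 := key (σ i)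
    rwa [hσ i, hs i] at h2
  refine ⟨fun i => ((Fib (s (c i))).orderIsoOfFin (hcard i)
      (((Fib (c i)).orderIsoOfFin rfl).symm ⟨i, hmem i⟩)).1, ?_, ?_, ?_⟩
  · intro i
    set x : Fin (Fib (c i)).card := ((Fib (c i)).orderIsoOfFin rfl).symm ⟨i, hmem i⟩ with hx
    set j : ι := ((Fib (s (c i))).orderIsoOfFin (hcard i) x).1 with hj
    have hmemj : j ∈ Fib (s (c i)) := ((Fib (s (c i))).orderIsoOfFin (hcard i) x).2
    have hcj : c j = s (c i) := (hmem' _ _).mp hmemj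
    have hscj : s (c j) = c i := by rw [hcj, hs]
    -- goal : π j = i
    show ((Fib (s (c j))).orderIsoOfFin (hcard j)
      (((Fib (c j)).orderIsoOfFin rfl).symm ⟨j, hmem j⟩)).1 = i
    have h1 : ((((Fib (c j)).orderIsoOfFin rfl).symm ⟨j, hmem j⟩ : Fin _) : ℕ)
        = ((((Fib (s (c i))).orderIsoOfFin (hcard i)).symm
            ((Fib (s (c i))).orderIsoOfFin (hcard i) x) : Fin _) : ℕ) := by
      apply orderIso_symm_congr_aux (congrArg Fib hcj) rfl (hcard i)
      rfl
    rw [OrderIso.symm_apply_apply] at h1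
    have h2 : ((Fib (s (c j))).orderIsoOfFin (hcard j)
        (((Fib (c j)).orderIsoOfFin rfl).symm ⟨j, hmem j⟩) : ι)
        = ((Fib (c i)).orderIsoOfFin rfl x : ι) :=
      orderIso_congr_aux (congrArg Fib hscj) (hcard j) rfl _ _ h1
    rw [h2, hx, OrderIso.apply_symm_apply]
  · intro i
    exact (hmem' _ _).mp ((Fib (s (c i))).orderIsoOfFin (hcard i) _).2
  · intro i hfix
    have h2 : ((Fib (s (c i))).orderIsoOfFin (hcard i)
        (((Fib (c i)).orderIsoOfFin rfl).symm ⟨i, hmem i⟩) : ι)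
        = ((Fib (c i)).orderIsoOfFin rfl (((Fib (c i)).orderIsoOfFin rfl).symm ⟨i, hmem i⟩) : ι) :=
      orderIso_congr_aux (congrArg Fib hfix) (hcard i) rfl _ _ rfl
    show ((Fib (s (c i))).orderIsoOfFin (hcard i)
        (((Fib (c i)).orderIsoOfFin rfl).symm ⟨i, hmem i⟩) : ι) = i
    rw [h2, OrderIso.apply_symm_apply]


theorem mul_eq_one_unique {M : Type*} [CommMonoid M] {a b x : M}
    (ha : a * x = 1) (hb : b * x = 1) : a = b := by
  calc a = a * (b * x) := by rw [hb, mul_one]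
    _ = b * (a * x) := by rw [mul_left_comm, mul_comm b]
    _ = b := by rw [ha, mul_one]

section Core
open AdjoinRoot
variable {J : Type} [Fintype J] [DecidableEq J]
variable (F : J → k[X]) (P : J → J) (rinv : ∀ p, AdjoinRoot (F p))
variable (hmon : ∀ p, (F p).Monic) (hdeg : ∀ p, 0 < (F p).natDegree)
variable (hT : ∀ p, aeval (rinv (P p)) (F p) = 0)
variable (hU : ∀ p, aeval (rinv p) (F (P p)) = 0)

def Tm (p : J) : AdjoinRoot (F p) →ₐ[k] AdjoinRoot (F (P p)) :=
  AdjoinRoot.liftAlgHom (F p) (Algebra.ofId k _) (rinv (P p)) (hT p)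

def Um (p : J) : AdjoinRoot (F (P p)) →ₐ[k] AdjoinRoot (F p) :=
  AdjoinRoot.liftAlgHom (F (P p)) (Algebra.ofId k _) (rinv p) (hU p)

def km (p : J) : AdjoinRoot (F p) →ₗ[k] k :=
  (AdjoinRoot.powerBasis' (hmon p)).basis.coord ⟨0, hdeg p⟩

def lm (p : J) : AdjoinRoot (F p) →ₗ[k] k :=
  km F hmon hdeg p + (km F hmon hdeg (P p)).comp (Tm F P rinv hT p).toLinearMap

theorem Tm_mk (p : J) (g : k[X]) :
    Tm F P rinv hT p (AdjoinRoot.mk (F p) g) = aeval (rinv (P p)) g := by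
  unfold Tm; exact AdjoinRoot.liftAlgHom_mk (F p) _ _ (hT p) g

theorem Um_mk (p : J) (g : k[X]) :
    Um F P rinv hU p (AdjoinRoot.mk (F (P p)) g) = aeval (rinv p) g := by
  unfold Um; exact AdjoinRoot.liftAlgHom_mk (F (P p)) _ _ (hU p) g

theorem Tm_root (p : J) : Tm F P rinv hT p (root (F p)) = rinv (P p) := by
  unfold Tm; exact AdjoinRoot.liftAlgHom_root (F p) _ _ (hT p)

theorem Um_root (p : J) : Um F P rinv hU p (root (F (P p))) = rinv p := by
  unfold Um; exact AdjoinRoot.liftAlgHom_root (F (P p)) _ _ (hU p)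

variable (hrinv : ∀ p, rinv p * AdjoinRoot.root (F p) = 1)

include hrinv in
theorem Tm_rinv (p : J) : Tm F P rinv hT p (rinv p) = root (F (P p)) := by
  apply mul_eq_one_unique (x := rinv (P p))
  · rw [← Tm_root F P rinv hT p, ← map_mul, hrinv, map_one]
  · rw [mul_comm]; exact hrinv (P p)

include hrinv in
theorem Um_rinv (p : J) : Um F P rinv hU p (rinv (P p)) = root (F p) := by
  apply mul_eq_one_unique (x := rinv p)
  · rw [← Um_root F P rinv hU p, ← map_mul, hrinv, map_one]
  · rw [mul_comm]; exact hrinv p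

include hrinv in
theorem Tm_aeval (p : J) (g : k[X]) :
    Tm F P rinv hT p (aeval (rinv p) g) = aeval (root (F (P p))) g := by
  rw [← Polynomial.aeval_algHom_apply, Tm_rinv F P rinv hT hrinv]

include hrinv in
theorem Um_aeval (p : J) (g : k[X]) :
    Um F P rinv hU p (aeval (rinv (P p)) g) = aeval (root (F p)) g := by
  rw [← Polynomial.aeval_algHom_apply, Um_rinv F P rinv hU hrinv]

include hrinv in
theorem Um_Tm (p : J) (z : AdjoinRoot (F p)) :
    Um F P rinv hU p (Tm F P rinv hT p z) = z := by
  obtain ⟨g, rfl⟩ := AdjoinRoot.mk_surjective z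
  rw [Tm_mk, Um_aeval F P rinv hU hrinv, AdjoinRoot.aeval_eq]

include hrinv in
theorem Tm_Um (p : J) (z : AdjoinRoot (F (P p))) :
    Tm F P rinv hT p (Um F P rinv hU p z) = z := by
  obtain ⟨g, rfl⟩ := AdjoinRoot.mk_surjective z
  rw [Um_mk, Tm_aeval F P rinv hT hrinv, AdjoinRoot.aeval_eq]

theorem km_one (p : J) : km F hmon hdeg p 1 = 1 := by
  have h1 : (1 : AdjoinRoot (F p)) = (AdjoinRoot.powerBasis' (hmon p)).basis ⟨0, hdeg p⟩ := by
    rw [PowerBasis.basis_eq_pow]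
    simp
  rw [km, h1, Module.Basis.coord_apply, Module.Basis.repr_self, Finsupp.single_eq_same]

theorem lm_one (p : J) : lm F P rinv hmon hdeg hT p 1 = 2 := by
  simp only [lm, LinearMap.add_apply, LinearMap.coe_comp, Function.comp_apply,
    AlgHom.toLinearMap_apply, map_one]
  rw [km_one F hmon hdeg p, km_one F hmon hdeg (P p)]
  norm_num

def coreB (c : J → k) : LinearMap.BilinForm k (∀ p, AdjoinRoot (F p)) :=
  LinearMap.mk₂ k
    (fun v w => ∑ p, c p *
      lm F P rinv hmon hdeg hT p (v p * Um F P rinv hU p (w (P p))))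
    (fun v v' w => by
      simp only [Pi.add_apply, add_mul, map_add, mul_add]
      rw [Finset.sum_add_distrib])
    (fun a v w => by
      simp only [Pi.smul_apply, smul_mul_assoc, map_smul, smul_eq_mul, Finset.mul_sum]
      apply Finset.sum_congr rfl
      intros; ring)
    (fun v w w' => by
      simp only [Pi.add_apply, map_add, mul_add, add_mul]
      rw [Finset.sum_add_distrib])
    (fun a v w => by
      simp only [Pi.smul_apply, map_smul, mul_smul_comm, smul_eq_mul, Finset.mul_sum]
      apply Finset.sum_congr rfl
      intros; ring)

theorem coreB_apply (c : J → k) (v w : ∀ p, AdjoinRoot (F p)) :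
    coreB F P rinv hmon hdeg hT hU c v w = ∑ p, c p *
      lm F P rinv hmon hdeg hT p (v p * Um F P rinv hU p (w (P p))) := rfl

include hrinv in
theorem lm_compat (hP : ∀ p, P (P p) = p) (p : J)
    (a : AdjoinRoot (F p)) (b : AdjoinRoot (F (P p))) :
    lm F P rinv hmon hdeg hT (P p) (b * Tm F P rinv hT p a)
      = lm F P rinv hmon hdeg hT p (a * Um F P rinv hU p b) := by
  obtain ⟨ga, rfl⟩ := AdjoinRoot.mk_surjective a
  obtain ⟨gb, rfl⟩ := AdjoinRoot.mk_surjective b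
  simp only [lm, LinearMap.add_apply, LinearMap.coe_comp, Function.comp_apply,
    AlgHom.toLinearMap_apply, map_mul]
  rw [Tm_mk, Tm_mk, Um_mk, Tm_aeval F P rinv hT hrinv,
    Tm_aeval F P rinv hT hrinv]
  rw [hP p]
  rw [AdjoinRoot.aeval_eq, AdjoinRoot.aeval_eq]
  rw [add_comm]
  congr 1
  · rw [mul_comm]
  · rw [mul_comm]

include hrinv in
theorem coreB_symm (hP : ∀ p, P (P p) = p) (c : J → k) (hc : ∀ p, c (P p) = c p)
    (v w : ∀ p, AdjoinRoot (F p)) :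
    coreB F P rinv hmon hdeg hT hU c v w = coreB F P rinv hmon hdeg hT hU c w v := by
  choose gv hgv using fun p => AdjoinRoot.mk_surjective (v p)
  have key : ∀ p, Um F P rinv hU (P p) (v (P (P p))) = Tm F P rinv hT p (v p) := by
    intro p
    rw [← hgv (P (P p)), Um_mk, hP p, ← Tm_mk, hgv]
  rw [coreB_apply, coreB_apply]
  refine Fintype.sum_equiv (Function.Involutive.toPerm P hP) _ _ (fun p => ?_)
  show _ = c (P p) * lm F P rinv hmon hdeg hT (P p) (w (P p) * Um F P rinv hU (P p) (v (P (P p))))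
  rw [key p, hc p, lm_compat F P rinv hmon hdeg hT hU hrinv hP p (v p) (w (P p))]

include hrinv in
theorem coreB_nondeg (hirr : ∀ p, Irreducible (F p)) (hchar : (2:k) ≠ 0)
    (c : J → k) (hc0 : ∀ p, c p ≠ 0) (hP : ∀ p, P (P p) = p)
    (v : ∀ p, AdjoinRoot (F p))
    (hv : ∀ w, coreB F P rinv hmon hdeg hT hU c v w = 0) : v = 0 := by
  by_contra hne
  obtain ⟨q, hq⟩ : ∃ q, v q ≠ 0 := by
    by_contra h
    push_neg at h
    exact hne (funext h)
  letI : Fact (Irreducible (F q)) := ⟨hirr q⟩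
  set w : ∀ p, AdjoinRoot (F p) :=
    Function.update 0 (P q) (Tm F P rinv hT q (v q)⁻¹) with hw
  have hthis := hv w
  rw [coreB_apply, Finset.sum_eq_single q] at hthis
  · rw [hw] at hthis
    rw [Function.update_self] at hthis
    rw [Um_Tm F P rinv hT hU hrinv, mul_inv_cancel₀ hq, lm_one] at hthis
    rcases mul_eq_zero.mp hthis with h | h
    · exact hc0 q h
    · exact hchar h
  · intro p _ hpq
    have hPp : w (P p) = 0 := by
      rw [hw, Function.update_of_ne]
      · rfl
      · intro h
        exact hpq (by rw [← hP p, h, hP q])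
    rw [hPp, map_zero, mul_zero, map_zero, mul_zero]
  · intro h
    exact absurd (Finset.mem_univ q) h

include hrinv in
theorem coreB_isom (c : J → k) (v w : ∀ p, AdjoinRoot (F p)) :
    coreB F P rinv hmon hdeg hT hU c (fun p => root (F p) * v p)
        (fun p => root (F p) * w p)
      = coreB F P rinv hmon hdeg hT hU c v w := by
  rw [coreB_apply, coreB_apply]
  refine Finset.sum_congr rfl (fun p _ => ?_)
  have h1 : Um F P rinv hU p (root (F (P p)) * w (P p))
      = rinv p * Um F P rinv hU p (w (P p)) := by
    rw [map_mul, Um_root F P rinv hU p]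
  rw [h1]
  congr 1
  congr 1
  calc (root (F p) * v p) * (rinv p * Um F P rinv hU p (w (P p)))
      = (rinv p * root (F p)) * (v p * Um F P rinv hU p (w (P p))) := by ring
    _ = v p * Um F P rinv hU p (w (P p)) := by rw [hrinv, one_mul]

theorem coreB_single_left (c : J → k) (p : J) (z : AdjoinRoot (F p))
    (w : ∀ p, AdjoinRoot (F p)) :
    coreB F P rinv hmon hdeg hT hU c (Pi.single p z) w
      = c p * lm F P rinv hmon hdeg hT p (z * Um F P rinv hU p (w (P p))) := by
  rw [coreB_apply, Finset.sum_eq_single p]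
  · rw [Pi.single_eq_same]
  · intro q _ hqp
    rw [Pi.single_eq_of_ne hqp, zero_mul, map_zero, mul_zero]
  · intro h
    exact absurd (Finset.mem_univ p) h

theorem coreB_det (p₀ : J) (hdeg1 : (F p₀).natDegree = 1) (u : k) :
    (LinearMap.toMatrix₂ (Pi.basis fun p => (AdjoinRoot.powerBasis' (hmon p)).basis)
        (Pi.basis fun p => (AdjoinRoot.powerBasis' (hmon p)).basis)
        (coreB F P rinv hmon hdeg hT hU (fun p => if p = p₀ then u else 1))).det
    = u * (LinearMap.toMatrix₂ (Pi.basis fun p => (AdjoinRoot.powerBasis' (hmon p)).basis)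
        (Pi.basis fun p => (AdjoinRoot.powerBasis' (hmon p)).basis)
        (coreB F P rinv hmon hdeg hT hU (fun _ => 1))).det := by
  classical
  set bW := Pi.basis fun p => (AdjoinRoot.powerBasis' (hmon p)).basis with hbW
  set M1 := LinearMap.toMatrix₂ bW bW (coreB F P rinv hmon hdeg hT hU (fun _ => 1)) with hM1
  set ρ : Σ p : J, Fin (AdjoinRoot.powerBasis' (hmon p)).dim := ⟨p₀, ⟨0, hdeg p₀⟩⟩ with hρ
  have hval : ∀ (cw : J → k) (x y : Σ p : J, Fin (AdjoinRoot.powerBasis' (hmon p)).dim),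
      LinearMap.toMatrix₂ bW bW (coreB F P rinv hmon hdeg hT hU cw) x y
      = cw x.1 * lm F P rinv hmon hdeg hT x.1
          ((AdjoinRoot.powerBasis' (hmon x.1)).basis x.2 *
            Um F P rinv hU x.1
              ((Pi.single y.1 ((AdjoinRoot.powerBasis' (hmon y.1)).basis y.2) :
                ∀ p, AdjoinRoot (F p)) (P x.1))) := by
    intro cw x y
    rw [LinearMap.toMatrix₂_apply, hbW, Pi.basis_apply, Pi.basis_apply, coreB_single_left]
  have key : LinearMap.toMatrix₂ bW bW
      (coreB F P rinv hmon hdeg hT hU (fun p => if p = p₀ then u else 1))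
      = M1.updateRow ρ (u • M1 ρ) := by
    ext x y
    rw [hval, Matrix.updateRow_apply]
    by_cases hx : x = ρ
    · subst hx
      rw [if_pos rfl, Pi.smul_apply, smul_eq_mul, hM1, hval, one_mul]
      simp
    · rw [if_neg hx, hM1, hval]
      have hx1 : x.1 ≠ p₀ := by
        intro h
        apply hx
        rcases x with ⟨p, a⟩
        simp only at h
        subst h
        have ha : (a : ℕ) = 0 := by
          have h2 : (a : ℕ) < (F p).natDegree := a.isLt
          rw [hdeg1] at h2
          omega
        rw [hρ]
        congr 1
        exact Fin.ext ha
      show (if x.1 = p₀ then u else 1) * _ = _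
      rw [if_neg hx1, one_mul]
  rw [key, Matrix.det_updateRow_smul, Matrix.updateRow_eq_self]

end Core

end AuxLemmas

/-- **Cor. 4.6.** If `M` is a semi-simple module with `M⁰ ≠ 0` and
`d ∈ k*`, there is a quadratic space of determinant `d` (in `k*/k*²`) having an
isometry with module `M`. -/
theorem exists_quadraticSpace_det_hasIsometryWithModule
    (hchar : (2 : k) ≠ 0)
    (D : ModuleData k) (hss : D.Semisimple) (hM0 : ∃ i, D.IsIdx0 i)
    (d : k) (hd : d ≠ 0) :
    ∃ B : LinearMap.BilinForm k (Fin D.dim → k), IsQuadraticSpace B ∧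
      (∃ c : k, c ≠ 0 ∧ detOf B = d * c ^ 2) ∧ HasIsometryWithModule B D := by
  classical
  -- basic facts about the polynomials
  have h0 : ∀ i, (D.f i).coeff 0 ≠ 0 := by
    intro i h
    obtain ⟨σ, hσ⟩ := D.selfdual
    have h1 := (hσ i).1
    rw [starPoly, h, inv_zero, map_zero, zero_mul] at h1
    exact (D.monic (σ i)).ne_zero h1
  have hdeg : ∀ i, 0 < (D.f i).natDegree := by
    intro i
    by_contra h
    push_neg at h
    obtain ⟨a, ha⟩ := Polynomial.natDegree_eq_zero.mp (Nat.le_zero.mp h)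
    have hm := D.monic i
    rw [← ha] at hm
    have ha1 : a = 1 := by simpa [Polynomial.Monic, Polynomial.leadingCoeff_C] using hm
    exact (D.irr i).not_isUnit (by rw [← ha, ha1, map_one]; exact isUnit_one)
  -- the involution on the index type of D
  obtain ⟨σ, hσ⟩ := D.selfdual
  obtain ⟨π, hπ2, hπc, hπfix⟩ := exists_involution_matching
      (fun i => (D.f i, D.n i)) (fun b => (starPoly b.1, b.2))
      (fun i => by
        simp only
        rw [starPoly_starPoly (D.monic i) (h0 i)])
      σ (fun i => by simp only; rw [(hσ i).1, (hσ i).2.2])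
  have hfπ : ∀ i, D.f (π i) = starPoly (D.f i) := fun i => congrArg Prod.fst (hπc i)
  have hnπ : ∀ i, D.n (π i) = D.n i := fun i => congrArg Prod.snd (hπc i)
  -- the flattened index type
  set J := Σ i : D.ι, Fin (D.n i) with hJ
  set F : J → k[X] := fun p => D.f p.1 with hF
  set P : J → J := fun p => ⟨π p.1, Fin.cast (hnπ p.1).symm p.2⟩ with hPdef
  have hP : ∀ p, P (P p) = p := by
    rintro ⟨i, m⟩
    refine Sigma.ext (hπ2 i) ?_
    rw [Fin.heq_ext_iff (congrArg D.n (hπ2 i))]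
    simp [P]
  have hstF : ∀ p, F (P p) = starPoly (F p) := fun p => hfπ p.1
  have hmonF : ∀ p : J, (F p).Monic := fun p => D.monic p.1
  have hirrF : ∀ p : J, Irreducible (F p) := fun p => D.irr p.1
  have h0F : ∀ p : J, (F p).coeff 0 ≠ 0 := fun p => h0 p.1
  have hdegF : ∀ p : J, 0 < (F p).natDegree := fun p => hdeg p.1
  -- the distinguished type-0 index
  obtain ⟨i₀, hi₀⟩ := hM0
  have hfix : starPoly (D.f i₀) = D.f i₀ := by
    rcases hi₀ with h | h <;> rw [h]
    · exact starPoly_X_sub_one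
    · exact starPoly_X_add_one
  have hπi₀ : π i₀ = i₀ := hπfix i₀ (by simp only; rw [hfix])
  set p₀ : J := ⟨i₀, ⟨0, D.npos i₀⟩⟩ with hp₀def
  have hdeg1 : (F p₀).natDegree = 1 := by
    show (D.f i₀).natDegree = 1
    rcases hi₀ with h | h <;> rw [h]
    · rw [show ((X : k[X]) - 1) = X - Polynomial.C 1 by rw [map_one], natDegree_X_sub_C]
    · rw [show ((X : k[X]) + 1) = X + Polynomial.C 1 by rw [map_one], natDegree_X_add_C]
  have hPp₀ : P p₀ = p₀ := by
    refine Sigma.ext hπi₀ ?_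
    rw [Fin.heq_ext_iff (congrArg D.n hπi₀)]
    simp [P, p₀]
  -- roots are invertible
  have hroot_ne : ∀ p : J, AdjoinRoot.root (F p) ≠ 0 := by
    intro p hroot
    letI : Fact (Irreducible (F p)) := ⟨hirrF p⟩
    have h1 : aeval (AdjoinRoot.root (F p)) (F p) = 0 := by
      rw [AdjoinRoot.aeval_eq, AdjoinRoot.mk_self]
    rw [hroot, Polynomial.aeval_def, Polynomial.eval₂_at_zero] at h1
    exact h0F p ((algebraMap k (AdjoinRoot (F p))).injective
      (h1.trans (map_zero (algebraMap k (AdjoinRoot (F p)))).symm))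
  set rinv : ∀ p : J, AdjoinRoot (F p) := fun p =>
    letI : Fact (Irreducible (F p)) := ⟨hirrF p⟩
    (AdjoinRoot.root (F p))⁻¹ with hrinvdef
  have hrinv : ∀ p, rinv p * AdjoinRoot.root (F p) = 1 := by
    intro p
    letI : Fact (Irreducible (F p)) := ⟨hirrF p⟩
    exact inv_mul_cancel₀ (hroot_ne p)
  have hT : ∀ p, aeval (rinv (P p)) (F p) = 0 := by
    intro p
    letI : Fact (Irreducible (F (P p))) := ⟨hirrF (P p)⟩
    apply aeval_inv_of_star_root (h0F p) (hroot_ne (P p))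
    rw [← hstF p, AdjoinRoot.aeval_eq, AdjoinRoot.mk_self]
  have hU : ∀ p, aeval (rinv p) (F (P p)) = 0 := by
    intro p
    letI : Fact (Irreducible (F p)) := ⟨hirrF p⟩
    rw [hstF p]
    apply aeval_inv_root_of_star (h0F p) (hroot_ne p)
    rw [AdjoinRoot.aeval_eq, AdjoinRoot.mk_self]
  -- finrank bookkeeping
  haveI hfinI : ∀ p : J, Module.Finite k (AdjoinRoot (F p)) := fun p =>
    Module.Finite.of_basis (AdjoinRoot.powerBasisAux' (hmonF p))
  have hfinrank : ∀ p : J, Module.finrank k (AdjoinRoot (F p)) = (F p).natDegree := fun p => by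
    rw [Module.finrank_eq_card_basis (AdjoinRoot.powerBasisAux' (hmonF p)), Fintype.card_fin]
  have hdim : ∑ p : J, (F p).natDegree = D.dim := by
    rw [ModuleData.dim]
    rw [show (Finset.univ : Finset J)
        = (Finset.univ : Finset D.ι).sigma (fun i => (Finset.univ : Finset (Fin (D.n i))))
      from (Finset.univ_sigma_univ).symm]
    rw [Finset.sum_sigma]
    refine Finset.sum_congr rfl fun i _ => ?_
    show ∑ _s : Fin (D.n i), (D.f i).natDegree = D.n i * (D.e i * (D.f i).natDegree)
    rw [Finset.sum_const, Finset.card_univ, Fintype.card_fin, smul_eq_mul, hss i, one_mul]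
  have hWfin : Module.finrank k (∀ p : J, AdjoinRoot (F p)) = D.dim := by
    rw [Module.finrank_pi_fintype, ← hdim]
    exact Finset.sum_congr rfl fun p _ => hfinrank p
  obtain ⟨ψ⟩ : Nonempty ((Fin D.dim → k) ≃ₗ[k] (∀ p : J, AdjoinRoot (F p))) :=
    FiniteDimensional.nonempty_linearEquiv_of_finrank_eq
      (by rw [Module.finrank_fin_fun, hWfin])
  -- bases and matrices
  set bW : Module.Basis (Σ p : J, Fin (AdjoinRoot.powerBasis' (hmonF p)).dim) k
      (∀ p : J, AdjoinRoot (F p)) :=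
    Pi.basis fun p : J => (AdjoinRoot.powerBasis' (hmonF p)).basis with hbW
  have hcard2 : Fintype.card (Σ p : J, Fin (AdjoinRoot.powerBasis' (hmonF p)).dim)
      = Module.finrank k (Fin D.dim → k) := by
    rw [Module.finrank_fin_fun, Fintype.card_sigma, ← hdim]
    exact Finset.sum_congr rfl fun p _ => by rw [Fintype.card_fin]; rfl
  set e2 := Fintype.equivFinOfCardEq hcard2 with he2
  set bV := bW.reindex e2 with hbV
  set fB := Module.finBasis k (Fin D.dim → k) with hfB
  set Pm := LinearMap.toMatrix fB bV ψ.toLinearMap with hPm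
  set M1 := LinearMap.toMatrix₂ bW bW
      (coreB F P rinv hmonF hdegF hT hU (fun _ => 1)) with hM1
  have hM1det : M1.det ≠ 0 := by
    have hnd : (coreB F P rinv hmonF hdegF hT hU (fun _ => 1)).Nondegenerate := by
      refine LinearMap.BilinForm.Nondegenerate.ofSeparatingLeft ?_
      intro v hv
      exact coreB_nondeg F P rinv hmonF hdegF hT hU hrinv hirrF hchar
        (fun _ => 1) (fun _ => one_ne_zero) hP v hv
    have := hnd.toMatrix bW
    exact Matrix.nondegenerate_iff_det_ne_zero.mp this
  have hPmdet : Pm.det ≠ 0 := (LinearEquiv.isUnit_det ψ fB bV).ne_zero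
  -- the scaling factor
  set cc : k := M1.det * Pm.det ^ 2 with hcc
  have hccne : cc ≠ 0 := mul_ne_zero hM1det (pow_ne_zero 2 hPmdet)
  set u : k := d * cc with hu
  have hune : u ≠ 0 := mul_ne_zero hd hccne
  set cw : J → k := fun p => if p = p₀ then u else 1 with hcw
  have hcw0 : ∀ p, cw p ≠ 0 := by
    intro p
    rw [hcw]
    dsimp only
    split
    · exact hune
    · exact one_ne_zero
  have hcwP : ∀ p, cw (P p) = cw p := by
    intro p
    rw [hcw]
    dsimp only
    congr 1
    by_cases h : p = p₀
    · rw [h, hPp₀]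
    · simp only [eq_iff_iff]
      constructor
      · intro hPp
        have := congrArg P hPp
        rw [hP p, hPp₀] at this
        exact this
      · intro hp
        rw [hp, hPp₀]
  set B0 := coreB F P rinv hmonF hdegF hT hU cw with hB0
  set B : LinearMap.BilinForm k (Fin D.dim → k) :=
    B0.compl₁₂ ψ.toLinearMap ψ.toLinearMap with hB
  have hBapp : ∀ v w, B v w = B0 (ψ v) (ψ w) := fun v w => rfl
  refine ⟨B, ⟨?_, ?_⟩, ⟨cc, hccne, ?_⟩, ?_⟩
  · -- symmetric
    intro v w
    rw [hBapp, hBapp]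
    exact coreB_symm F P rinv hmonF hdegF hT hU hrinv hP cw hcwP (ψ v) (ψ w)
  · -- nondegenerate
    intro v hv
    have : ψ v = 0 := by
      apply coreB_nondeg F P rinv hmonF hdegF hT hU hrinv hirrF hchar cw hcw0 hP
      intro w
      have := hv (ψ.symm w)
      rwa [hBapp, LinearEquiv.apply_symm_apply] at this
    have := congrArg ψ.symm this
    rwa [LinearEquiv.symm_apply_apply, map_zero] at this
  · -- determinant
    show (LinearMap.toMatrix₂ fB fB B).det = d * cc ^ 2
    have hgram : LinearMap.toMatrix₂ fB fB B
        = Pm.transpose * (LinearMap.toMatrix₂ bV bV B0) * Pm := by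
      rw [hB]
      exact LinearMap.toMatrix₂_compl₁₂ bV bV fB fB B0 ψ.toLinearMap ψ.toLinearMap
    have hMv : LinearMap.toMatrix₂ bV bV B0
        = (LinearMap.toMatrix₂ bW bW B0).submatrix e2.symm e2.symm := by
      ext x y
      rw [LinearMap.toMatrix₂_apply, Matrix.submatrix_apply, LinearMap.toMatrix₂_apply,
        hbV, Module.Basis.reindex_apply, Module.Basis.reindex_apply]
    have hMu : (LinearMap.toMatrix₂ bW bW B0).det = u * M1.det := by
      rw [hB0, hcw, hM1]
      exact coreB_det F P rinv hmonF hdegF hT hU p₀ hdeg1 u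
    rw [hgram, Matrix.det_mul, Matrix.det_mul, Matrix.det_transpose, hMv,
      Matrix.det_submatrix_equiv_self, hMu, hu, hcc]
    ring
  · -- isometry with module
    set tW : (∀ p : J, AdjoinRoot (F p)) ≃ₗ[k] (∀ p : J, AdjoinRoot (F p)) :=
      { toFun := fun v p => AdjoinRoot.root (F p) * v p
        invFun := fun v p => rinv p * v p
        map_add' := by
          intro v w
          funext p
          show AdjoinRoot.root (F p) * (v p + w p) = _
          rw [mul_add]
          rfl
        map_smul' := by
          intro a v
          funext p
          show AdjoinRoot.root (F p) * (a • v p) = a • (AdjoinRoot.root (F p) * v p)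
          rw [mul_smul_comm]
        left_inv := by
          intro v
          funext p
          show rinv p * (AdjoinRoot.root (F p) * v p) = v p
          rw [← mul_assoc, hrinv, one_mul]
        right_inv := by
          intro v
          funext p
          show AdjoinRoot.root (F p) * (rinv p * v p) = v p
          rw [← mul_assoc, mul_comm (AdjoinRoot.root (F p)), hrinv, one_mul] } with htW
    set t := (ψ.trans tW).trans ψ.symm with ht
    set ξ : ∀ i : D.ι, AdjoinRoot (D.f i) ≃ₐ[k]
        (Polynomial k ⧸ Ideal.span {((D.f i).map (RingHom.id k)) ^ D.e i}) := fun i =>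
      Ideal.quotientEquivAlgOfEq k (by rw [Polynomial.map_id, hss i, pow_one]) with hξ
    set Φ : (∀ p : J, AdjoinRoot (F p)) ≃ₗ[k] D.SpaceVia (RingHom.id k) :=
      (LinearEquiv.piCurry k (fun (i : D.ι) (_ : Fin (D.n i)) => AdjoinRoot (D.f i))).trans
        (LinearEquiv.piCongrRight
          (fun i : D.ι => LinearEquiv.piCongrRight
            (fun _ : Fin (D.n i) => (ξ i).toLinearEquiv))) with hΦ
    have htWapp : ∀ z : ∀ p : J, AdjoinRoot (F p),
        tW z = fun p => AdjoinRoot.root (F p) * z p := fun z => rfl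
    refine ⟨t, ?_, ψ.trans Φ, ?_⟩
    · intro v w
      show B (t v) (t w) = B v w
      rw [hBapp, hBapp, ht]
      simp only [LinearEquiv.trans_apply, LinearEquiv.apply_symm_apply]
      rw [htWapp, htWapp]
      exact coreB_isom F P rinv hmonF hdegF hT hU hrinv cw (ψ v) (ψ w)
    · intro w
      simp only [LinearEquiv.trans_apply, ht, LinearEquiv.apply_symm_apply]
      have key : ∀ (v : ∀ p : J, AdjoinRoot (F p)),
          Φ (tW v) = (X : Polynomial k) • Φ v := by
        intro v
        funext i m
        have h1 : Φ (tW v) i m = ξ i (AdjoinRoot.root (D.f i) * v ⟨i, m⟩) := rfl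
        have h2 : ((X : Polynomial k) • Φ v) i m = (X : Polynomial k) • (ξ i (v ⟨i, m⟩)) := rfl
        rw [h1, h2]
        obtain ⟨g, hg⟩ := AdjoinRoot.mk_surjective (v ⟨i, m⟩)
        rw [← hg]
        have h3 : AdjoinRoot.root (D.f i) * AdjoinRoot.mk (D.f i) g
            = AdjoinRoot.mk (D.f i) (X * g) := by
          rw [show AdjoinRoot.root (D.f i) = AdjoinRoot.mk (D.f i) X from rfl, ← map_mul]
        rw [h3]
        have h4 : ∀ q : k[X], ξ i (AdjoinRoot.mk (D.f i) q)
            = Ideal.Quotient.mk (Ideal.span {((D.f i).map (RingHom.id k)) ^ D.e i}) q := by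
          intro q
          exact Ideal.quotientEquivAlgOfEq_mk k _ q
        rw [h4, h4]
        exact (Submodule.Quotient.mk_smul _ (X : Polynomial k) g).symm
      exact key (ψ w)

end
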